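/- Let p be a prime and d ≥ 2 an integer. With respect to the product Haar probability measure on the coefficient space ℤ_p^d of monic polynomials of degree d over ℤ_p, the set of separable monic polynomials of degree d has measure 1 − 1/p. -/

import Mathlib

open Polynomial MeasureTheory

noncomputable section

instance padicMeasurableSpace (p : ℕ) [Fact p.Prime] : MeasurableSpace ℤ_[p] := borel _

instance padicBorelSpace (p : ℕ) [Fact p.Prime] : BorelSpace ℤ_[p] := ⟨rfl⟩

/-- The Haar probability measure on `ℤ_[p]`, normalized so that `ℤ_[p]` has measure 1. -/
def padicHaar (p : ℕ) [Fact p.Prime] : Measure ℤ_[p] :=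
  Measure.addHaarMeasure ⟨⟨Set.univ, isCompact_univ⟩, by simp⟩

/-- The monic polynomial of degree `d` with non-leading coefficients given by `a`. -/
def monicOf {R : Type*} [CommRing R] (d : ℕ) (a : Fin d → R) : R[X] :=
  X ^ d + ∑ i : Fin d, C (a i) * X ^ (i : ℕ)

/-! ### Auxiliary lemmas -/

namespace MeasureSeparableAux

/-! #### Basic facts about `monicOf` -/

section MonicOf

variable {R : Type*} [CommRing R]

lemma monicOf_coeff_lt (d : ℕ) (a : Fin d → R) (i : Fin d) :
    (monicOf d a).coeff i = a i := by
  rw [monicOf, coeff_add, coeff_X_pow, if_neg (by omega : ¬ (i : ℕ) = d)]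
  rw [finset_sum_coeff]
  rw [Finset.sum_eq_single i]
  · simp
  · intro j _ hj
    rw [coeff_C_mul, coeff_X_pow, if_neg (fun h' => hj (Fin.ext h'.symm)), mul_zero]
  · simp

lemma monicOf_natDegree (d : ℕ) (a : Fin d → R) [Nontrivial R] :
    (monicOf d a).natDegree = d := by
  rw [monicOf]
  have h1 : (∑ i : Fin d, C (a i) * X ^ (i : ℕ)).degree < (X ^ d : R[X]).degree := by
    rw [degree_X_pow]
    apply lt_of_le_of_lt (degree_sum_le _ _)
    rw [Finset.sup_lt_iff (by exact_mod_cast WithBot.bot_lt_coe d)]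
    intro i _
    apply lt_of_le_of_lt (degree_C_mul_X_pow_le _ _)
    exact_mod_cast i.isLt
  rw [add_comm, natDegree_add_eq_right_of_degree_lt h1, natDegree_X_pow]

lemma monicOf_monic (d : ℕ) (a : Fin d → R) [Nontrivial R] : (monicOf d a).Monic := by
  rw [Monic, leadingCoeff, monicOf_natDegree, monicOf, coeff_add, coeff_X_pow, if_pos rfl,
    finset_sum_coeff]
  rw [Finset.sum_eq_zero, add_zero]
  intro j _
  rw [coeff_C_mul, coeff_X_pow, if_neg (by omega : ¬ d = (j:ℕ)), mul_zero]

lemma monicOf_map {S : Type*} [CommRing S] (φ : R →+* S) (d : ℕ) (a : Fin d → R) :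
    (monicOf d a).map φ = monicOf d (fun i => φ (a i)) := by
  rw [monicOf, monicOf, Polynomial.map_add, Polynomial.map_pow, map_X, Polynomial.map_sum]
  congr 1
  apply Finset.sum_congr rfl
  intro i _
  rw [Polynomial.map_mul, Polynomial.map_pow, map_X, map_C]

lemma monicOf_injective (d : ℕ) : Function.Injective (monicOf (R := R) d) := by
  intro a b h
  funext i
  rw [← monicOf_coeff_lt d a i, ← monicOf_coeff_lt d b i, h]

lemma monicOf_surjective (d : ℕ) [Nontrivial R] (g : R[X]) (hg : g.Monic)
    (hdeg : g.natDegree = d) : ∃ a : Fin d → R, monicOf d a = g := by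
  refine ⟨fun i => g.coeff i, ?_⟩
  ext n
  rcases lt_trichotomy n d with h | rfl | h
  · rw [monicOf_coeff_lt d _ ⟨n, h⟩]
  · rw [monicOf, coeff_add, coeff_X_pow, if_pos rfl, finset_sum_coeff,
      Finset.sum_eq_zero, add_zero]
    · exact (hdeg ▸ hg.coeff_natDegree).symm
    · intro j _
      rw [coeff_C_mul, coeff_X_pow, if_neg (by omega : ¬ n = (j:ℕ)), mul_zero]
  · rw [monicOf, coeff_add, coeff_X_pow, if_neg (by omega : ¬ n = d), finset_sum_coeff,
      Finset.sum_eq_zero, add_zero, eq_comm]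
    · exact coeff_eq_zero_of_natDegree_lt (by omega)
    · intro j _
      rw [coeff_C_mul, coeff_X_pow, if_neg (by omega : ¬ n = (j:ℕ)), mul_zero]

end MonicOf

/-! #### The transfer lemma: separability over `ℤ_[p]` vs over `ZMod p` -/

variable {p : ℕ} [Fact p.Prime]

lemma toZMod_surj : Function.Surjective (PadicInt.toZMod (p := p)) := by
  intro z
  refine ⟨(z.val : ℤ_[p]), ?_⟩
  rw [map_natCast]
  simp [ZMod.natCast_val, ZMod.cast_id]

lemma span_pair_top_iff_map {f : ℤ_[p][X]} (hf : f.Monic) :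
    Ideal.span {f, derivative f} = ⊤ ↔
      Ideal.span {f.map (PadicInt.toZMod), derivative (f.map PadicInt.toZMod)} = ⊤ := by
  have himg : (⇑(mapRingHom (PadicInt.toZMod (p := p))) '' {f, derivative f})
      = {f.map (PadicInt.toZMod), derivative (f.map PadicInt.toZMod)} := by
    rw [Set.image_insert_eq, Set.image_singleton]
    simp [derivative_map]
  constructor
  · intro h
    have := Ideal.map_span (mapRingHom (PadicInt.toZMod (p := p))) {f, derivative f}
    rw [h, Ideal.map_top, himg] at this
    exact this.symm
  · intro h
    set φ := mapRingHom (PadicInt.toZMod (p := p)) with hφ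
    have hsurj : Function.Surjective φ := Polynomial.map_surjective _ toZMod_surj
    set I : Ideal ℤ_[p][X] := Ideal.span {f, derivative f} with hI
    have hmap : Ideal.map φ I = ⊤ := by
      rw [hI, Ideal.map_span, himg]; exact h
    have hcomap := Ideal.comap_map_of_surjective φ hsurj I
    rw [hmap, Ideal.comap_top] at hcomap
    have hker : Ideal.comap φ ⊥ = Ideal.span {(C (p : ℤ_[p]) : ℤ_[p][X])} := by
      have : Ideal.comap φ ⊥ = RingHom.ker φ := rfl
      rw [this, hφ, ker_mapRingHom, PadicInt.ker_toZMod, PadicInt.maximalIdeal_eq_span_p,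
        Ideal.map_span, Set.image_singleton]
    rw [hker] at hcomap
    have h1 : (1 : ℤ_[p][X]) ∈ I ⊔ Ideal.span {(C (p : ℤ_[p]) : ℤ_[p][X])} := by
      rw [← hcomap]; exact Submodule.mem_top
    obtain ⟨i, hi, c, hc, hic⟩ := Submodule.mem_sup.mp h1
    obtain ⟨w, hw⟩ := Ideal.mem_span_singleton.mp hc
    letI : Module.Finite ℤ_[p] (AdjoinRoot f) := (AdjoinRoot.powerBasis' hf).finite
    set J : Ideal (AdjoinRoot f) := Ideal.map (AdjoinRoot.mk f) I with hJ
    suffices hJt : J = ⊤ by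
      have hcm := Ideal.comap_map_of_surjective (AdjoinRoot.mk f) AdjoinRoot.mk_surjective I
      rw [← hJ, hJt, Ideal.comap_top] at hcm
      have hkermk : Ideal.comap (AdjoinRoot.mk f) ⊥ ≤ I := by
        intro x hx
        have : AdjoinRoot.mk f x = 0 := hx
        rw [AdjoinRoot.mk_eq_zero] at this
        obtain ⟨t, rfl⟩ := this
        exact Ideal.mul_mem_right _ _ (Ideal.subset_span (by simp))
      rw [eq_top_iff, hcm]
      exact sup_le le_rfl hkermk
    letI : Module.Finite ℤ_[p] (AdjoinRoot f ⧸ J) :=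
      Module.Finite.of_surjective (Ideal.Quotient.mkₐ ℤ_[p] J).toLinearMap
        Ideal.Quotient.mk_surjective
    set ψ : ℤ_[p][X] →+* (AdjoinRoot f ⧸ J) :=
      (Ideal.Quotient.mk J).comp (AdjoinRoot.mk f) with hψ
    have hpsi_i : ψ i = 0 := by
      rw [hψ, RingHom.comp_apply, Ideal.Quotient.eq_zero_iff_mem]
      exact Ideal.mem_map_of_mem _ hi
    have hone : (1 : AdjoinRoot f ⧸ J) = (p : ℤ_[p]) • ψ w := by
      calc (1 : AdjoinRoot f ⧸ J) = ψ 1 := (map_one ψ).symm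
        _ = ψ i + ψ (C (p:ℤ_[p]) * w) := by rw [← map_add, ← hw, hic]
        _ = ψ (C (p:ℤ_[p])) * ψ w := by rw [hpsi_i, zero_add, map_mul]
        _ = (p : ℤ_[p]) • ψ w := by
              rw [Algebra.smul_def]
              congr 1
    have htop : (⊤ : Submodule ℤ_[p] (AdjoinRoot f ⧸ J)) ≤
        (IsLocalRing.maximalIdeal ℤ_[p]) • ⊤ := by
      intro x _
      have : x = (p : ℤ_[p]) • (x * ψ w) := by
        rw [mul_comm, ← smul_mul_assoc, ← hone, one_mul]
      rw [this]
      exact Submodule.smul_mem_smul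
        (by rw [PadicInt.maximalIdeal_eq_span_p]; exact Ideal.subset_span rfl)
        Submodule.mem_top
    have hbot : (⊤ : Submodule ℤ_[p] (AdjoinRoot f ⧸ J)) = ⊥ :=
      Submodule.eq_bot_of_le_smul_of_le_jacobson_bot _ _ Module.Finite.fg_top htop
        (le_of_eq (IsLocalRing.jacobson_eq_maximalIdeal ⊥ bot_ne_top).symm)
    have h10 : (1 : AdjoinRoot f ⧸ J) ∈ (⊥ : Submodule ℤ_[p] _) :=
      hbot ▸ (Submodule.mem_top : (1 : AdjoinRoot f ⧸ J) ∈ ⊤)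
    have : (1 : AdjoinRoot f ⧸ J) = 0 := (Submodule.mem_bot _).mp h10
    rw [Ideal.eq_top_iff_one]
    have := (Ideal.Quotient.eq_zero_iff_mem).mp this
    simpa using this

lemma span_pair_eq_top_iff {R : Type*} [CommSemiring R] {x y : R} :
    Ideal.span {x, y} = ⊤ ↔ IsCoprime x y := by
  rw [Ideal.eq_top_iff_one, Ideal.mem_span_pair]
  rfl

/-! #### Squarefree decomposition over a field -/

section Decomp

variable {F : Type*} [Field F]

lemma exists_sqf_decomp (f : F[X]) (hf : f.Monic) :
    ∃ g h : F[X], g.Monic ∧ h.Monic ∧ Squarefree g ∧ f = g * h ^ 2 := by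
  generalize hn : f.natDegree = n
  induction n using Nat.strong_induction_on generalizing f with
  | _ n ih =>
    by_cases hsq : Squarefree f
    · exact ⟨f, 1, hf, monic_one, hsq, by ring⟩
    · rw [Squarefree] at hsq
      push_neg at hsq
      obtain ⟨x, hxd, hxu⟩ := hsq
      have hx0 : x ≠ 0 := by
        rintro rfl
        rw [mul_zero, zero_dvd_iff] at hxd
        exact hf.ne_zero hxd
      set π := x * C (x.leadingCoeff)⁻¹ with hπ
      have hπm : π.Monic := monic_mul_leadingCoeff_inv hx0
      have hππ : π * π ∣ f := by
        obtain ⟨t, ht⟩ := hxd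
        refine ⟨t * C (x.leadingCoeff ^ 2), ?_⟩
        have hC : (C (x.leadingCoeff)⁻¹ : F[X]) * C (x.leadingCoeff)⁻¹
            * C (x.leadingCoeff ^ 2) = 1 := by
          rw [← C_mul, ← C_mul, ← C_1]
          congr 1
          have := leadingCoeff_ne_zero.mpr hx0
          field_simp
        calc f = x * x * t := ht
          _ = x * x * t * (C (x.leadingCoeff)⁻¹ * C (x.leadingCoeff)⁻¹
              * C (x.leadingCoeff ^ 2)) := by rw [hC, mul_one]
          _ = π * π * (t * C (x.leadingCoeff ^ 2)) := by rw [hπ]; ring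
      obtain ⟨f', hf'⟩ := hππ
      have hπdeg : 1 ≤ π.natDegree := by
        by_contra h0
        push_neg at h0
        have h00 : π.natDegree = 0 := by omega
        have hπ1 : π = 1 := hπm.natDegree_eq_zero.mp h00
        exact hxu (IsUnit.of_mul_eq_one _ (hπ ▸ hπ1))
      have hf'm : f'.Monic := by
        have := hf
        rw [hf'] at this
        exact (hπm.mul hπm).of_mul_monic_left this
      have hdeg : f'.natDegree < n := by
        have : f.natDegree = (π * π).natDegree + f'.natDegree := by
          rw [hf', natDegree_mul (mul_ne_zero hπm.ne_zero hπm.ne_zero) hf'm.ne_zero]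
        rw [natDegree_mul hπm.ne_zero hπm.ne_zero] at this
        omega
      obtain ⟨g, h, hg, hh, hgsq, hdec⟩ := ih _ hdeg f' hf'm rfl
      exact ⟨g, π * h, hg, hπm.mul hh, hgsq, by rw [hf', hdec]; ring⟩

lemma sqf_decomp_unique (h₁ : F[X]) (hh₁ : h₁.Monic) :
    ∀ g₁ g₂ h₂ : F[X], g₁.Monic → g₂.Monic → h₂.Monic →
    Squarefree g₁ → Squarefree g₂ → g₁ * h₁ ^ 2 = g₂ * h₂ ^ 2 → g₁ = g₂ ∧ h₁ = h₂ := by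
  generalize hn : h₁.natDegree = n
  induction n using Nat.strong_induction_on generalizing h₁ with
  | _ n ih =>
    intro g₁ g₂ h₂ hg₁ hg₂ hh₂ hsq₁ hsq₂ heq
    by_cases h1 : h₁ = 1
    · subst h1
      have : h₂ * h₂ ∣ g₁ := ⟨g₂, by rw [show g₁ = g₁ * 1 ^ 2 by ring, heq]; ring⟩
      have hu : IsUnit h₂ := hsq₁ h₂ this
      have : h₂ = 1 := hh₂.eq_one_of_isUnit hu
      subst this
      simpa using heq
    · have hnu : ¬IsUnit h₁ := fun hu => h1 (hh₁.eq_one_of_isUnit hu)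
      obtain ⟨π, hπm, hπi, hπd⟩ := exists_monic_irreducible_factor h₁ hnu
      have hπp : Prime π := hπi.prime
      have hπ0 : π ≠ 0 := hπp.ne_zero
      have hπh₂ : π ∣ h₂ := by
        by_contra hndvd
        have hsq : π * π ∣ g₂ * h₂ ^ 2 := by
          rw [← heq]
          obtain ⟨u, hu⟩ := hπd
          exact ⟨g₁ * u ^ 2 , by rw [hu]; ring⟩
        have hπg₂ : π ∣ g₂ := by
          have : π ∣ g₂ * h₂ ^ 2 := dvd_trans (dvd_mul_right π π) hsq
          rcases hπp.dvd_mul.mp this with h | h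
          · exact h
          · exact absurd (hπp.dvd_of_dvd_pow h) hndvd
        obtain ⟨t, ht⟩ := hπg₂
        have hπt : π ∣ t * h₂ ^ 2 := by
          obtain ⟨s, hs⟩ := hsq
          refine ⟨s, mul_left_cancel₀ hπ0 ?_⟩
          rw [show π * (t * h₂ ^ 2) = π * t * h₂ ^ 2 by ring, ← ht, hs]
          ring
        have : π ∣ t := by
          rcases hπp.dvd_mul.mp hπt with h | h
          · exact h
          · exact absurd (hπp.dvd_of_dvd_pow h) hndvd
        have : π * π ∣ g₂ := by
          obtain ⟨u, hu⟩ := this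
          exact ⟨u, by rw [ht, hu]; ring⟩
        exact hπi.not_isUnit (hsq₂ π this)
      obtain ⟨h₁', rfl⟩ := hπd
      obtain ⟨h₂', rfl⟩ := hπh₂
      have hh₁' : h₁'.Monic := hπm.of_mul_monic_left hh₁
      have hh₂' : h₂'.Monic := hπm.of_mul_monic_left hh₂
      have heq' : g₁ * h₁' ^ 2 = g₂ * h₂' ^ 2 := by
        have : π ^ 2 * (g₁ * h₁' ^ 2) = π ^ 2 * (g₂ * h₂' ^ 2) := by
          rw [show π ^ 2 * (g₁ * h₁' ^ 2) = g₁ * (π * h₁') ^ 2 by ring,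
            show π ^ 2 * (g₂ * h₂' ^ 2) = g₂ * (π * h₂') ^ 2 by ring, heq]
        exact mul_left_cancel₀ (pow_ne_zero 2 hπ0) this
      have hlt : h₁'.natDegree < n := by
        have h1 : 1 ≤ π.natDegree := hπi.natDegree_pos
        have : (π * h₁').natDegree = π.natDegree + h₁'.natDegree :=
          natDegree_mul hπ0 hh₁'.ne_zero
        omega
      obtain ⟨hg, hh⟩ := ih _ hlt h₁' hh₁' rfl g₁ g₂ h₂' hg₁ hg₂ hh₂' hsq₁ hsq₂ heq'
      exact ⟨hg, by rw [hh]⟩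

end Decomp

/-! #### Counting squarefree monic polynomials over a finite field -/

section Counting

variable (F : Type*) [Field F] [Fintype F] [DecidableEq F]

def Mset (n : ℕ) : Finset F[X] :=
  (Finset.univ : Finset (Fin n → F)).image (monicOf n)

lemma mem_Mset {n : ℕ} {f : F[X]} : f ∈ Mset F n ↔ f.Monic ∧ f.natDegree = n := by
  constructor
  · rintro hf
    obtain ⟨a, -, rfl⟩ := Finset.mem_image.mp hf
    exact ⟨monicOf_monic n a, monicOf_natDegree n a⟩
  · rintro ⟨h1, h2⟩
    obtain ⟨a, rfl⟩ := monicOf_surjective n f h1 h2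
    exact Finset.mem_image.mpr ⟨a, Finset.mem_univ a, rfl⟩

lemma card_Mset (n : ℕ) : (Mset F n).card = Fintype.card F ^ n := by
  rw [Mset, Finset.card_image_of_injective _ (monicOf_injective n), Finset.card_univ]
  simp [Fintype.card_fun]

def sfree (n : ℕ) : Finset F[X] :=
  @Finset.filter _ (fun f => Squarefree f) (Classical.decPred _) (Mset F n)

lemma mem_sfree {n : ℕ} {f : F[X]} :
    f ∈ sfree F n ↔ (f.Monic ∧ f.natDegree = n) ∧ Squarefree f := by
  rw [sfree, @Finset.mem_filter _ _ (Classical.decPred _), mem_Mset]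

lemma master (n : ℕ) :
    Fintype.card F ^ n
      = ∑ k ∈ Finset.range (n / 2 + 1), (sfree F (n - 2 * k)).card * Fintype.card F ^ k := by
  classical
  set Φ : (Σ _k : ℕ, F[X] × F[X]) → F[X] := fun x => x.2.1 * x.2.2 ^ 2 with hΦ
  set S : Finset (Σ _k : ℕ, F[X] × F[X]) :=
    (Finset.range (n / 2 + 1)).sigma (fun k => (sfree F (n - 2 * k)) ×ˢ (Mset F k)) with hS
  have hmem : ∀ x ∈ S, (x.2.1.Monic ∧ x.2.1.natDegree = n - 2 * x.1 ∧ Squarefree x.2.1)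
      ∧ (x.2.2.Monic ∧ x.2.2.natDegree = x.1) ∧ x.1 ≤ n / 2 := by
    rintro ⟨k, g, h⟩ hx
    obtain ⟨hk, hgh⟩ := Finset.mem_sigma.mp hx
    obtain ⟨hg, hh⟩ := Finset.mem_product.mp hgh
    obtain ⟨⟨hgm, hgd⟩, hg2⟩ := (mem_sfree F).mp hg
    obtain ⟨hhm, hhd⟩ := (mem_Mset F).mp hh
    exact ⟨⟨hgm, hgd, hg2⟩, ⟨hhm, hhd⟩, by simpa using Nat.lt_succ_iff.mp (Finset.mem_range.mp hk)⟩
  have hinj : Set.InjOn Φ S := by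
    rintro ⟨k₁, g₁, h₁⟩ hx ⟨k₂, g₂, h₂⟩ hy hxy
    obtain ⟨⟨hg₁m, hg₁d, hg₁s⟩, ⟨hh₁m, hh₁d⟩, -⟩ := hmem _ hx
    obtain ⟨⟨hg₂m, hg₂d, hg₂s⟩, ⟨hh₂m, hh₂d⟩, -⟩ := hmem _ hy
    dsimp only at hg₁m hg₁d hg₁s hh₁m hh₁d hg₂m hg₂d hg₂s hh₂m hh₂d
    have heq : g₁ * h₁ ^ 2 = g₂ * h₂ ^ 2 := hxy
    obtain ⟨hg, hh⟩ := sqf_decomp_unique h₁ hh₁m g₁ g₂ h₂ hg₁m hg₂m hh₂m hg₁s hg₂s heq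
    have : k₁ = k₂ := by rw [← hh₁d, ← hh₂d, hh]
    subst this; subst hg; subst hh
    rfl
  have himg : S.image Φ = Mset F n := by
    ext f
    rw [Finset.mem_image]
    constructor
    · rintro ⟨⟨k, g, h⟩, hx, rfl⟩
      obtain ⟨⟨hgm, hgd, -⟩, ⟨hhm, hhd⟩, hk⟩ := hmem _ hx
      dsimp only at hgm hgd hhm hhd hk
      refine (mem_Mset F).mpr ⟨(hgm.mul (hhm.pow 2)), ?_⟩
      show (g * h ^ 2).natDegree = n
      rw [natDegree_mul hgm.ne_zero (hhm.pow 2).ne_zero, natDegree_pow, hgd, hhd]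
      omega
    · intro hf
      obtain ⟨hfm, hfd⟩ := (mem_Mset F).mp hf
      obtain ⟨g, h, hgm, hhm, hgs, hdec⟩ := exists_sqf_decomp f hfm
      refine ⟨⟨h.natDegree, g, h⟩, ?_, hdec.symm⟩
      have hd : n = g.natDegree + 2 * h.natDegree := by
        rw [← hfd, hdec, natDegree_mul hgm.ne_zero (hhm.pow 2).ne_zero, natDegree_pow]
      have hk2 : h.natDegree < n / 2 + 1 := by omega
      have hgd2 : g.natDegree = n - 2 * h.natDegree := by omega
      exact Finset.mem_sigma.mpr ⟨Finset.mem_range.mpr hk2,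
        Finset.mem_product.mpr ⟨(mem_sfree F).mpr ⟨⟨hgm, hgd2⟩, hgs⟩,
          (mem_Mset F).mpr ⟨hhm, rfl⟩⟩⟩
  calc Fintype.card F ^ n = (Mset F n).card := (card_Mset F n).symm
    _ = (S.image Φ).card := by rw [himg]
    _ = S.card := Finset.card_image_of_injOn hinj
    _ = ∑ k ∈ Finset.range (n / 2 + 1), (sfree F (n - 2 * k)).card * Fintype.card F ^ k := by
        rw [hS, Finset.card_sigma]
        exact Finset.sum_congr rfl fun k _ => by rw [Finset.card_product, card_Mset]

lemma card_sfree (n : ℕ) (hn : 2 ≤ n) :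
    (sfree F n).card = Fintype.card F ^ n - Fintype.card F ^ (n - 1) := by
  have h1 := master F n
  have h2 := master F (n - 2)
  set q := Fintype.card F
  rw [Finset.sum_range_succ'] at h1
  have hhalf : (n - 2) / 2 + 1 = n / 2 := by omega
  have key : ∑ k ∈ Finset.range (n / 2), (sfree F (n - 2 * (k + 1))).card * q ^ (k + 1)
      = q ^ (n - 1) := by
    have : q * q ^ (n - 2) = q ^ (n - 1) := by
      rw [← pow_succ']
      congr 1
      omega
    rw [← this, h2, Finset.mul_sum, ← hhalf]
    refine Finset.sum_congr rfl fun k _ => ?_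
    have : n - 2 * (k + 1) = n - 2 - 2 * k := by omega
    rw [this]
    ring
  rw [key] at h1
  simp only [Nat.mul_zero, Nat.sub_zero, pow_zero, mul_one] at h1
  omega

end Counting

/-! #### Measure-theoretic facts about `padicHaar` -/

instance : IsProbabilityMeasure (padicHaar p) :=
  ⟨by
    have := Measure.addHaarMeasure_self
      (K₀ := (⟨⟨Set.univ, isCompact_univ⟩, by simp⟩ : TopologicalSpace.PositiveCompacts ℤ_[p]))
    simpa [padicHaar] using this⟩

instance : (padicHaar p).IsAddLeftInvariant := by
  unfold padicHaar; infer_instance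

lemma fiber0_eq : (PadicInt.toZMod (p := p)) ⁻¹' {0} = {x : ℤ_[p] | ‖x‖ < 1} := by
  ext x
  simp only [Set.mem_preimage, Set.mem_singleton_iff, Set.mem_setOf_eq]
  rw [PadicInt.norm_lt_one_iff_dvd]
  constructor
  · intro h
    have : x ∈ RingHom.ker (PadicInt.toZMod (p := p)) := h
    rw [PadicInt.ker_toZMod, PadicInt.maximalIdeal_eq_span_p, Ideal.mem_span_singleton] at this
    exact this
  · intro h
    have : x ∈ Ideal.span {(p : ℤ_[p])} := Ideal.mem_span_singleton.mpr h
    rw [← PadicInt.maximalIdeal_eq_span_p, ← PadicInt.ker_toZMod] at this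
    exact this

lemma isOpen_fiber0 : IsOpen ((PadicInt.toZMod (p := p)) ⁻¹' {0}) := by
  rw [fiber0_eq]
  exact isOpen_lt continuous_norm continuous_const

lemma fiber_eq_preimage (t : ZMod p) (c : ℤ_[p]) (hc : PadicInt.toZMod c = -t) :
    (PadicInt.toZMod (p := p)) ⁻¹' {t}
      = (fun x => c + x) ⁻¹' ((PadicInt.toZMod (p := p)) ⁻¹' {0}) := by
  ext x
  simp only [Set.mem_preimage, Set.mem_singleton_iff, map_add, hc]
  constructor
  · intro h; rw [h]; ring
  · intro h; linear_combination h

lemma measurable_fiber (t : ZMod p) : MeasurableSet ((PadicInt.toZMod (p := p)) ⁻¹' {t}) := by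
  obtain ⟨c, hc⟩ := toZMod_surj (-t)
  rw [fiber_eq_preimage t c hc]
  exact (isOpen_fiber0.preimage (continuous_const.add continuous_id)).measurableSet

lemma measure_fiber (t : ZMod p) :
    padicHaar p ((PadicInt.toZMod (p := p)) ⁻¹' {t}) = (p : ENNReal)⁻¹ := by
  have key : ∀ t : ZMod p, padicHaar p ((PadicInt.toZMod (p := p)) ⁻¹' {t})
      = padicHaar p ((PadicInt.toZMod (p := p)) ⁻¹' {0}) := by
    intro t
    obtain ⟨c, hc⟩ := toZMod_surj (-t)
    rw [fiber_eq_preimage t c hc]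
    exact measure_preimage_add _ _ _
  have huniv : (Set.univ : Set ℤ_[p]) = ⋃ t ∈ (Finset.univ : Finset (ZMod p)),
      (PadicInt.toZMod (p := p)) ⁻¹' {t} := by
    ext x; simp
  have hsum : ∑ t ∈ (Finset.univ : Finset (ZMod p)),
      padicHaar p ((PadicInt.toZMod (p := p)) ⁻¹' {t}) = 1 := by
    rw [← measure_biUnion_finset ?_ (fun t _ => measurable_fiber t), ← huniv]
    · exact measure_univ
    · intro a _ b _ hab
      simp only [Function.onFun]
      apply Set.disjoint_left.mpr
      intro x hx1 hx2
      exact hab (by rw [← hx1, ← hx2])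
  rw [Finset.sum_congr rfl (fun t _ => key t)] at hsum
  rw [Finset.sum_const, Finset.card_univ, ZMod.card] at hsum
  have hp : (p : ENNReal) ≠ 0 := by
    exact_mod_cast Nat.Prime.ne_zero (Fact.out (p := p.Prime))
  have hptop : (p : ENNReal) ≠ ⊤ := ENNReal.natCast_ne_top p
  have := congrArg (fun x => (p : ENNReal)⁻¹ * x) hsum
  simp only [nsmul_eq_mul, ← mul_assoc, ENNReal.inv_mul_cancel hp hptop, one_mul, mul_one] at this
  rw [key t, this]

end MeasureSeparableAux

open MeasureSeparableAux

theorem measure_separable (p : ℕ) [Fact p.Prime] (d : ℕ) (hd : 2 ≤ d) :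
    Measure.pi (fun _ : Fin d => padicHaar p)
      {a : Fin d → ℤ_[p] |
        Ideal.span {monicOf d a, derivative (monicOf d a)} = (⊤ : Ideal (Polynomial ℤ_[p]))} =
      1 - (p : ENNReal)⁻¹ := by
  classical
  have hp : (p : ENNReal) ≠ 0 := by
    exact_mod_cast Nat.Prime.ne_zero (Fact.out (p := p.Prime))
  have hptop : (p : ENNReal) ≠ ⊤ := ENNReal.natCast_ne_top p
  set T : Finset (Fin d → ZMod p) :=
    Finset.univ.filter (fun t => Squarefree (monicOf d t)) with hT
  have hset : {a : Fin d → ℤ_[p] |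
      Ideal.span {monicOf d a, derivative (monicOf d a)} = (⊤ : Ideal (Polynomial ℤ_[p]))}
      = ⋃ t ∈ T, Set.univ.pi (fun i => (PadicInt.toZMod (p := p)) ⁻¹' {t i}) := by
    ext a
    simp only [Set.mem_setOf_eq, Set.mem_iUnion, Set.mem_pi, Set.mem_univ, forall_true_left,
      Set.mem_preimage, Set.mem_singleton_iff, exists_prop]
    rw [span_pair_top_iff_map (monicOf_monic d a), monicOf_map, span_pair_eq_top_iff,
      ← Polynomial.separable_def, PerfectField.separable_iff_squarefree]
    constructor
    · intro h
      exact ⟨fun i => PadicInt.toZMod (a i),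
        Finset.mem_filter.mpr ⟨Finset.mem_univ _, h⟩, fun i => rfl⟩
    · rintro ⟨t, ht, hat⟩
      have : (fun i => PadicInt.toZMod (a i)) = t := funext hat
      rw [this]
      exact (Finset.mem_filter.mp ht).2
  rw [hset]
  rw [measure_biUnion_finset]
  · have hcardT : T.card = p ^ d - p ^ (d - 1) := by
      have himg : T.image (monicOf d) = sfree (ZMod p) d := by
        ext f
        rw [Finset.mem_image, mem_sfree]
        constructor
        · rintro ⟨t, ht, rfl⟩
          exact ⟨⟨monicOf_monic d t, monicOf_natDegree d t⟩, (Finset.mem_filter.mp ht).2⟩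
        · rintro ⟨⟨hm, hdeg⟩, hsq⟩
          obtain ⟨t, rfl⟩ := monicOf_surjective d f hm hdeg
          exact ⟨t, Finset.mem_filter.mpr ⟨Finset.mem_univ _, hsq⟩, rfl⟩
      have := card_sfree (ZMod p) d hd
      rw [ZMod.card] at this
      rw [← Finset.card_image_of_injective T (monicOf_injective d), himg, this]
    have hfib : ∀ t : Fin d → ZMod p,
        Measure.pi (fun _ : Fin d => padicHaar p)
          (Set.univ.pi (fun i => (PadicInt.toZMod (p := p)) ⁻¹' {t i}))
        = ((p : ENNReal)⁻¹) ^ d := by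
      intro t
      rw [Measure.pi_pi]
      simp [measure_fiber]
    rw [Finset.sum_congr rfl (fun t _ => hfib t), Finset.sum_const, hcardT]
    -- arithmetic: (p^d - p^(d-1)) • (p⁻¹)^d = 1 - p⁻¹
    have hcast : ((p ^ d - p ^ (d - 1) : ℕ) : ENNReal)
        = (p : ENNReal) ^ d - (p : ENNReal) ^ (d - 1) := by
      rw [ENNReal.natCast_sub]
      push_cast
      rfl
    rw [nsmul_eq_mul, hcast]
    have hPinv : (p : ENNReal) ^ (d - 1) * ((p : ENNReal)⁻¹) ^ d = (p : ENNReal)⁻¹ := by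
      calc (p : ENNReal) ^ (d - 1) * ((p : ENNReal)⁻¹) ^ d
          = (p : ENNReal) ^ (d - 1) * (((p : ENNReal)⁻¹) ^ (d - 1) * (p : ENNReal)⁻¹) := by
            rw [show ((p : ENNReal)⁻¹) ^ d = ((p : ENNReal)⁻¹) ^ (d - 1) * (p : ENNReal)⁻¹ by
              rw [← pow_succ]; congr 1; omega]
        _ = ((p : ENNReal) * (p : ENNReal)⁻¹) ^ (d - 1) * (p : ENNReal)⁻¹ := by
            rw [mul_pow]; ring
        _ = (p : ENNReal)⁻¹ := by rw [ENNReal.mul_inv_cancel hp hptop, one_pow, one_mul]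
    have hPd : (p : ENNReal) ^ d * ((p : ENNReal)⁻¹) ^ d = 1 := by
      rw [← mul_pow, ENNReal.mul_inv_cancel hp hptop, one_pow]
    refine ENNReal.eq_sub_of_add_eq (by simpa using ENNReal.inv_ne_top.mpr hp) ?_
    calc ((p : ENNReal) ^ d - (p : ENNReal) ^ (d - 1)) * ((p : ENNReal)⁻¹) ^ d + (p : ENNReal)⁻¹
        = ((p : ENNReal) ^ d - (p : ENNReal) ^ (d - 1)) * ((p : ENNReal)⁻¹) ^ d
          + (p : ENNReal) ^ (d - 1) * ((p : ENNReal)⁻¹) ^ d := by rw [hPinv]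
      _ = ((p : ENNReal) ^ d - (p : ENNReal) ^ (d - 1) + (p : ENNReal) ^ (d - 1))
          * ((p : ENNReal)⁻¹) ^ d := by rw [add_mul]
      _ = (p : ENNReal) ^ d * ((p : ENNReal)⁻¹) ^ d := by
          rw [tsub_add_cancel_of_le (pow_le_pow_right₀ (by
            exact_mod_cast (Fact.out (p := p.Prime)).one_lt.le) (by omega))]
      _ = 1 := hPd
  · intro a _ b _ hab
    simp only [Function.onFun]
    apply Set.disjoint_left.mpr
    intro x hx1 hx2
    apply hab
    funext i
    have h1 := hx1 i (Set.mem_univ i)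
    have h2 := hx2 i (Set.mem_univ i)
    simp only [Set.mem_preimage, Set.mem_singleton_iff] at h1 h2
    rw [← h1, ← h2]
  · exact fun t _ => MeasurableSet.univ_pi (fun i => measurable_fiber (t i))

end
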